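/- Let X and Y be nonempty compact convex subsets of Hausdorff real topological vector spaces, let G=(X,Y,U,V) be a two-player game with U, V continuous, and let φ, ψ : ℝ→ℝ be strictly increasing continuous bijections such that ψ(V(x,y)) = -φ(U(x,y)) for all (x,y) ∈ X×Y, and such that the zero-sum game (X,Y,φ∘U) has a saddle point with value w. Then for every pair of outside options (u0,v0) ∈ ℝ² admitting a (u0,v0)-feasible contract, there exists a (u0,v0)-constrained Nash equilibrium (x*,y*) of G with U(x*,y*) = median(u0, φ⁻¹(-ψ(v0)), φ⁻¹(w)) and V(x*,y*) = median(ψ⁻¹(-φ(u0)), v0, ψ⁻¹(-w)). In particular, G is feasible. -/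

import Mathlib

/-- A two-player game over strategy sets `X ⊆ E`, `Y ⊆ F` with payoffs `U, V` is
feasible: for every pair of outside options admitting a feasible contract, there
exists a constrained Nash equilibrium. -/
def FeasibleOn {E F : Type*} (X : Set E) (Y : Set F) (U V : E → F → ℝ) : Prop :=
  ∀ u0 v0 : ℝ, (∃ x ∈ X, ∃ y ∈ Y, u0 ≤ U x y ∧ v0 ≤ V x y) →
    ∃ x' ∈ X, ∃ y' ∈ Y, u0 ≤ U x' y' ∧ v0 ≤ V x' y' ∧
      (∀ x ∈ X, U x' y' < U x y' → V x y' < v0) ∧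
      (∀ y ∈ Y, V x' y' < V x' y → U x' y < u0)

/-- The median of three real numbers. -/
noncomputable def median3 (a b c : ℝ) : ℝ := max (min a b) (min (max a b) c)

/-- `Function.invFun` of a strictly monotone bijection commutes with `max`. -/
lemma invFun_comm_max (g : ℝ → ℝ) (hg : StrictMono g) (hb : Function.Bijective g) (s t : ℝ) :
    Function.invFun g (max s t) = max (Function.invFun g s) (Function.invFun g t) := by
  obtain ⟨s', rfl⟩ := hb.2 s; obtain ⟨t', rfl⟩ := hb.2 t
  rw [← hg.monotone.map_max, Function.leftInverse_invFun hb.1,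
    Function.leftInverse_invFun hb.1, Function.leftInverse_invFun hb.1]

/-- `Function.invFun` of a strictly monotone bijection commutes with `min`. -/
lemma invFun_comm_min (g : ℝ → ℝ) (hg : StrictMono g) (hb : Function.Bijective g) (s t : ℝ) :
    Function.invFun g (min s t) = min (Function.invFun g s) (Function.invFun g t) := by
  obtain ⟨s', rfl⟩ := hb.2 s; obtain ⟨t', rfl⟩ := hb.2 t
  rw [← hg.monotone.map_min, Function.leftInverse_invFun hb.1,
    Function.leftInverse_invFun hb.1, Function.leftInverse_invFun hb.1]

/-- `Function.invFun` of a strictly monotone bijection commutes with `median3`. -/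
lemma invFun_comm_median3 (g : ℝ → ℝ) (hg : StrictMono g) (hb : Function.Bijective g)
    (s t r : ℝ) :
    Function.invFun g (median3 s t r) =
      median3 (Function.invFun g s) (Function.invFun g t) (Function.invFun g r) := by
  unfold median3
  rw [invFun_comm_max g hg hb, invFun_comm_min g hg hb, invFun_comm_min g hg hb,
    invFun_comm_max g hg hb]

lemma clamp_comm (a b w : ℝ) (hab : a ≤ b) : max a (min b w) = min b (max a w) := by
  rcases le_total w a with h | h <;> rcases le_total w b with h' | h' <;>
    simp [min_eq_left, min_eq_right, max_eq_left, max_eq_right, *] <;> linarith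

lemma median3_eq_clamp (a b w : ℝ) (hab : a ≤ b) : median3 a b w = max a (min b w) := by
  unfold median3
  rw [min_eq_left hab, max_eq_right hab]

lemma median3_neg (a b w : ℝ) (hab : a ≤ b) :
    median3 (-a) (-b) (-w) = -(max a (min b w)) := by
  unfold median3
  rw [min_neg_neg, max_neg_neg, min_neg_neg, max_neg_neg, max_eq_right hab,
    min_eq_left hab, clamp_comm a b w hab]

/-- Intermediate value construction: moving along a segment in `Y`, find a point where
the maximum of `f` over the compact set `X` equals `c`, together with a maximizer. -/
lemma aux_max {α β : Type*} [TopologicalSpace α] [TopologicalSpace β]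
    [AddCommGroup β] [Module ℝ β] [IsTopologicalAddGroup β] [ContinuousSMul ℝ β]
    {X : Set α} {Y : Set β} (hXne : X.Nonempty) (hXcomp : IsCompact X) (hYconv : Convex ℝ Y)
    (f : α → β → ℝ) (hfc : ContinuousOn (fun p : α × β => f p.1 p.2) (X ×ˢ Y))
    {y0 y1 : β} (hy0 : y0 ∈ Y) (hy1 : y1 ∈ Y) {c : ℝ}
    (h0 : ∀ x ∈ X, f x y0 ≤ c) (h1 : ∃ x ∈ X, c ≤ f x y1) :
    ∃ y ∈ Y, ∃ x ∈ X, f x y = c ∧ ∀ x' ∈ X, f x' y ≤ c := by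
  haveI : CompactSpace ↥X := isCompact_iff_compactSpace.mp hXcomp
  set p : ℝ → ℝ := fun θ => max 0 (min 1 θ) with hp
  have hp0 : ∀ θ, 0 ≤ p θ := fun θ => le_max_left _ _
  have hp1 : ∀ θ, p θ ≤ 1 := fun θ => max_le zero_le_one (min_le_left _ _)
  have hpc : Continuous p := continuous_const.max (continuous_const.min continuous_id)
  set σ : ℝ → β := fun θ => (1 - p θ) • y0 + p θ • y1 with hσ
  have hσY : ∀ θ, σ θ ∈ Y := fun θ =>
    hYconv hy0 hy1 (by linarith [hp1 θ]) (hp0 θ) (by ring)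
  have hσc : Continuous σ := by fun_prop
  have hσ0 : σ 0 = y0 := by simp [hσ, hp]
  have hσ1 : σ 1 = y1 := by
    have : p 1 = 1 := by simp [hp]
    simp [hσ, this]
  have attain : ∀ yy ∈ Y, ∃ xm ∈ X,
      IsGreatest ((fun x : ↥X => f x.1 yy) '' Set.univ) (f xm yy) := by
    intro yy hyy
    have hslice : ContinuousOn (fun x => f x yy) X :=
      hfc.comp ((continuous_id.prodMk continuous_const).continuousOn)
        (fun x hx => ⟨hx, hyy⟩)
    obtain ⟨xm, hxm, hmax⟩ := hXcomp.exists_isMaxOn hXne hslice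
    refine ⟨xm, hxm, ⟨⟨⟨xm, hxm⟩, Set.mem_univ _, rfl⟩, ?_⟩⟩
    rintro z ⟨x', -, rfl⟩; exact hmax x'.2
  set h : ℝ → ℝ := fun θ => sSup ((fun x : ↥X => f x.1 (σ θ)) '' Set.univ) with hh
  have hhc : Continuous h := by
    apply isCompact_univ.continuous_sSup
    show Continuous fun q : ℝ × ↥X => f (q.2 : α) (σ q.1)
    exact hfc.comp_continuous
      ((continuous_subtype_val.comp continuous_snd).prodMk (hσc.comp continuous_fst))
      (fun q => ⟨q.2.2, hσY q.1⟩)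
  have hval : ∀ θ, ∃ xm ∈ X, f xm (σ θ) = h θ ∧ ∀ x' ∈ X, f x' (σ θ) ≤ h θ := by
    intro θ
    obtain ⟨xm, hxm, hg⟩ := attain (σ θ) (hσY θ)
    refine ⟨xm, hxm, hg.csSup_eq.symm, ?_⟩
    intro x' hx'
    rw [show h θ = f xm (σ θ) from hg.csSup_eq]
    exact hg.2 ⟨⟨x', hx'⟩, Set.mem_univ _, rfl⟩
  have hh0 : h 0 ≤ c := by
    obtain ⟨xm, hxm, he, -⟩ := hval 0
    rw [← he, hσ0]; exact h0 xm hxm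
  have hh1 : c ≤ h 1 := by
    obtain ⟨x1, hx1, hcx1⟩ := h1
    obtain ⟨-, -, -, hb⟩ := hval 1
    have := hb x1 hx1
    rw [hσ1] at this; linarith
  obtain ⟨θ, hθmem, hθ⟩ := intermediate_value_Icc zero_le_one hhc.continuousOn ⟨hh0, hh1⟩
  obtain ⟨xm, hxm, he, hb⟩ := hval θ
  exact ⟨σ θ, hσY θ, xm, hxm, by rw [he, hθ], fun x' hx' => hθ ▸ hb x' hx'⟩

/-- A strictly competitive game obtained from a zero-sum game with value `w` by
strictly increasing continuous transformations `φ, ψ` admits, for every pair of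
outside options with a feasible contract, a constrained Nash equilibrium with
payoffs given by the corresponding medians; in particular, it is feasible. -/
theorem strictly_competitive_constrained_equilibrium
    {E F : Type*}
    [AddCommGroup E] [Module ℝ E] [TopologicalSpace E]
    [IsTopologicalAddGroup E] [ContinuousSMul ℝ E] [T2Space E]
    [AddCommGroup F] [Module ℝ F] [TopologicalSpace F]
    [IsTopologicalAddGroup F] [ContinuousSMul ℝ F] [T2Space F]
    (X : Set E) (Y : Set F) (hXne : X.Nonempty) (hYne : Y.Nonempty)
    (hXcomp : IsCompact X) (hYcomp : IsCompact Y)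
    (hXconv : Convex ℝ X) (hYconv : Convex ℝ Y)
    (U V : E → F → ℝ)
    (hUc : ContinuousOn (fun p : E × F => U p.1 p.2) (X ×ˢ Y))
    (hVc : ContinuousOn (fun p : E × F => V p.1 p.2) (X ×ˢ Y))
    (φ ψ : ℝ → ℝ)
    (hφmono : StrictMono φ) (hψmono : StrictMono ψ)
    (hφcont : Continuous φ) (hψcont : Continuous ψ)
    (hφbij : Function.Bijective φ) (hψbij : Function.Bijective ψ)
    (hcomp : ∀ x ∈ X, ∀ y ∈ Y, ψ (V x y) = -φ (U x y))
    (xs : E) (ys : F) (hxs : xs ∈ X) (hys : ys ∈ Y)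
    (hsaddle : (∀ x ∈ X, φ (U x ys) ≤ φ (U xs ys)) ∧
               (∀ y ∈ Y, φ (U xs ys) ≤ φ (U xs y)))
    (w : ℝ) (hw : φ (U xs ys) = w) :
    (∀ u0 v0 : ℝ, (∃ x ∈ X, ∃ y ∈ Y, u0 ≤ U x y ∧ v0 ≤ V x y) →
      ∃ xstar ∈ X, ∃ ystar ∈ Y,
        u0 ≤ U xstar ystar ∧ v0 ≤ V xstar ystar ∧
        (∀ x ∈ X, U xstar ystar < U x ystar → V x ystar < v0) ∧
        (∀ y ∈ Y, V xstar ystar < V xstar y → U xstar y < u0) ∧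
        U xstar ystar = median3 u0 (Function.invFun φ (-ψ v0)) (Function.invFun φ w) ∧
        V xstar ystar = median3 (Function.invFun ψ (-φ u0)) v0 (Function.invFun ψ (-w))) ∧
    FeasibleOn X Y U V := by
  have hfc : ContinuousOn (fun p : E × F => φ (U p.1 p.2)) (X ×ˢ Y) :=
    hφcont.comp_continuousOn hUc
  have hfc' : ContinuousOn (fun p : F × E => -(φ (U p.2 p.1))) (Y ×ˢ X) := by
    apply ContinuousOn.neg
    exact hφcont.comp_continuousOn
      (hUc.comp continuous_swap.continuousOn (fun p hp => ⟨hp.2, hp.1⟩))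
  have main : ∀ u0 v0 : ℝ, (∃ x ∈ X, ∃ y ∈ Y, u0 ≤ U x y ∧ v0 ≤ V x y) →
      ∃ xstar ∈ X, ∃ ystar ∈ Y,
        u0 ≤ U xstar ystar ∧ v0 ≤ V xstar ystar ∧
        (∀ x ∈ X, U xstar ystar < U x ystar → V x ystar < v0) ∧
        (∀ y ∈ Y, V xstar ystar < V xstar y → U xstar y < u0) ∧
        U xstar ystar = median3 u0 (Function.invFun φ (-ψ v0)) (Function.invFun φ w) ∧
        V xstar ystar = median3 (Function.invFun ψ (-φ u0)) v0 (Function.invFun ψ (-w)) := by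
    intro u0 v0 hfe
    obtain ⟨x0, hx0, y0, hy0, hu0, hv0⟩ := hfe
    set a := φ u0 with hadef
    set b := -ψ v0 with hbdef
    have hfa : a ≤ φ (U x0 y0) := hφmono.monotone hu0
    have hfb : φ (U x0 y0) ≤ b := by
      have h := hψmono.monotone hv0
      rw [hcomp x0 hx0 y0 hy0] at h
      rw [hbdef]; linarith
    have hab : a ≤ b := le_trans hfa hfb
    set t := max a (min b w) with htdef
    have hat : a ≤ t := le_max_left _ _
    have htb : t ≤ b := max_le hab (min_le_left _ _)
    -- common epilogue
    have key : ∀ xst ∈ X, ∀ yst ∈ Y, φ (U xst yst) = t →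
        (∀ x ∈ X, t < φ (U x yst) → b < φ (U x yst)) →
        (∀ y ∈ Y, φ (U xst y) < t → φ (U xst y) < a) →
        u0 ≤ U xst yst ∧ v0 ≤ V xst yst ∧
        (∀ x ∈ X, U xst yst < U x yst → V x yst < v0) ∧
        (∀ y ∈ Y, V xst yst < V xst y → U xst y < u0) ∧
        U xst yst = median3 u0 (Function.invFun φ (-ψ v0)) (Function.invFun φ w) ∧
        V xst yst = median3 (Function.invFun ψ (-φ u0)) v0 (Function.invFun ψ (-w)) := by
      intro xst hxst yst hyst hft c1 c2
      have hψv0 : ψ v0 = -b := by rw [hbdef]; ring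
      have hψV : ψ (V xst yst) = -t := by rw [hcomp xst hxst yst hyst, hft]
      refine ⟨?_, ?_, ?_, ?_, ?_, ?_⟩
      · exact hφmono.le_iff_le.mp (by rw [hft]; exact hat)
      · exact hψmono.le_iff_le.mp (by rw [hψV, hψv0]; linarith)
      · intro x hx hlt
        have h1 : t < φ (U x yst) := hft ▸ hφmono hlt
        have h2 : b < φ (U x yst) := c1 x hx h1
        have h3 : ψ (V x yst) < ψ v0 := by
          rw [hcomp x hx yst hyst, hψv0]; linarith
        exact hψmono.lt_iff_lt.mp h3
      · intro y hy hlt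
        have h1 : ψ (V xst yst) < ψ (V xst y) := hψmono hlt
        rw [hψV, hcomp xst hxst y hy] at h1
        have h2 : φ (U xst y) < t := by linarith
        exact hφmono.lt_iff_lt.mp (c2 y hy h2)
      · have hu0eq : u0 = Function.invFun φ a := by
          rw [hadef, Function.leftInverse_invFun hφbij.1]
        have hUeq : U xst yst = Function.invFun φ t := by
          rw [← hft, Function.leftInverse_invFun hφbij.1]
        rw [hUeq, hu0eq, show -ψ v0 = b from rfl,
          ← invFun_comm_median3 φ hφmono hφbij, median3_eq_clamp a b w hab]
      · have hv0eq : v0 = Function.invFun ψ (-b) := by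
          rw [← hψv0, Function.leftInverse_invFun hψbij.1]
        have hVeq : V xst yst = Function.invFun ψ (-t) := by
          rw [← hψV, Function.leftInverse_invFun hψbij.1]
        rw [hVeq, hv0eq, show φ u0 = a from rfl,
          ← invFun_comm_median3 ψ hψmono hψbij, median3_neg a b w hab]
    rcases lt_or_ge w a with hwa | haw
    · -- w < a : move y from ys towards y0
      have hwb : w ≤ b := le_of_lt (lt_of_lt_of_le hwa hab)
      have ht : t = a := by rw [htdef, min_eq_right hwb, max_eq_left hwa.le]
      obtain ⟨yst, hyst, xst, hxst, hfeq, hmax⟩ :=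
        aux_max hXne hXcomp hYconv (fun x y => φ (U x y)) hfc hys hy0 (c := a)
          (fun x hx => le_trans (hw ▸ hsaddle.1 x hx) hwa.le) ⟨x0, hx0, hfa⟩
      refine ⟨xst, hxst, yst, hyst, key xst hxst yst hyst (by rw [hfeq, ht]) ?_ ?_⟩
      · intro x hx hlt
        exact absurd hlt (not_lt.mpr (by rw [ht]; exact hmax x hx))
      · intro y hy hlt
        rw [ht] at hlt; exact hlt
    · rcases lt_or_ge b w with hbw | hwb
      · -- b < w : move x from xs towards x0
        have ht : t = b := by rw [htdef, min_eq_left hbw.le, max_eq_right hab]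
        obtain ⟨xst, hxst, yst, hyst, hfeq, hmin⟩ :=
          aux_max hYne hYcomp hXconv (fun y x => -(φ (U x y))) hfc' hxs hx0 (c := -b)
            (fun y hy => neg_le_neg (le_trans hbw.le (hw ▸ hsaddle.2 y hy)))
            ⟨y0, hy0, neg_le_neg hfb⟩
        refine ⟨xst, hxst, yst, hyst,
          key xst hxst yst hyst (by rw [ht]; simpa using hfeq) ?_ ?_⟩
        · intro x hx hlt
          rw [ht] at hlt; exact hlt
        · intro y hy hlt
          have h := hmin y hy
          rw [ht] at hlt
          exfalso; simp only [neg_le_neg_iff] at h; linarith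
      · -- a ≤ w ≤ b : saddle point works
        have ht : t = w := by rw [htdef, min_eq_right hwb, max_eq_right haw]
        refine ⟨xs, hxs, ys, hys, key xs hxs ys hys (by rw [hw, ht]) ?_ ?_⟩
        · intro x hx hlt
          exact absurd hlt (not_lt.mpr (by rw [ht, ← hw]; exact hsaddle.1 x hx))
        · intro y hy hlt
          exact absurd hlt (not_lt.mpr (by rw [ht, ← hw]; exact hsaddle.2 y hy))
  refine ⟨main, ?_⟩
  intro u0 v0 hfe
  obtain ⟨xst, hxst, yst, hyst, h1, h2, h3, h4, -, -⟩ := main u0 v0 hfe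
  exact ⟨xst, hxst, yst, hyst, h1, h2, h3, h4⟩
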